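/- The convolution of two double exponential densities with the same parameters (η₁, η₂, p, q) evaluated at u ≥ 0 equals e^{-η₁u}·(P_{2,1}·η₁ + P_{2,2}·η₁²·u), where P_{2,2} = p² and P_{2,1} = 2pq·η₂/(η₁+η₂). -/

import Mathlib

open Real MeasureTheory Set

lemma my_integral_exp_neg_mul_Ioi {c : ℝ} (hc : 0 < c) (a : ℝ) :
    ∫ x in Ioi a, Real.exp (-c * x) = Real.exp (-c * a) / c := by
  have h := integral_comp_mul_left_Ioi (fun x => Real.exp (-x)) a hc
  simp only [neg_mul] at h ⊢
  rw [show (fun x : ℝ => Real.exp (-(c * x))) = fun x => (fun y => Real.exp (-y)) (c * x) from rfl]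
  rw [h, integral_exp_neg_Ioi, smul_eq_mul]
  ring

lemma my_exp_mul_integrableOn_Iic {c : ℝ} (hc : 0 < c) (a : ℝ) :
    IntegrableOn (fun v : ℝ => Real.exp (c * v)) (Iic a) := by
  rw [← Measure.map_neg_eq_self (volume : Measure ℝ)]
  have m : MeasurableEmbedding fun x : ℝ => -x := (Homeomorph.neg ℝ).measurableEmbedding
  rw [m.integrableOn_map_iff]
  simp_rw [Function.comp_def, mul_neg, neg_preimage, neg_Iic]
  rw [integrableOn_Ici_iff_integrableOn_Ioi]
  simpa [neg_mul] using exp_neg_integrableOn_Ioi (-a) hc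

lemma my_integral_exp_mul_Iic {c : ℝ} (hc : 0 < c) (a : ℝ) :
    ∫ v in Iic a, Real.exp (c * v) = Real.exp (c * a) / c := by
  have h := integral_comp_neg_Iic a (fun x => Real.exp (-c * x))
  simp only [mul_neg, neg_mul, neg_neg] at h
  rw [show (fun v : ℝ => Real.exp (c * v)) = fun v : ℝ => Real.exp (c * v) from rfl]
  calc ∫ v in Iic a, Real.exp (c * v) = ∫ x in Ioi (-a), Real.exp (-(c * x)) := h
    _ = Real.exp (c * a) / c := by
        have := my_integral_exp_neg_mul_Ioi hc (-a)
        simp only [neg_mul, mul_neg, neg_neg] at this ⊢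
        rw [this]

/-- The convolution of two double exponential densities with the same parameters,
evaluated at u ≥ 0, equals e^{-η₁u}·(P₂₁·η₁ + P₂₂·η₁²·u) with P₂₂ = p² and
P₂₁ = 2pq·η₂/(η₁+η₂). -/
theorem double_exponential_selfconvolution_nonneg
    (η₁ η₂ p q : ℝ) (hη₁ : 0 < η₁) (hη₂ : 0 < η₂) (hp : 0 < p) (hq : 0 < q)
    (hpq : p + q = 1)
    (f : ℝ → ℝ)
    (hf : ∀ u : ℝ, f u = if 0 ≤ u then p * η₁ * Real.exp (-η₁ * u)
        else q * η₂ * Real.exp (η₂ * u))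
    (u : ℝ) (hu : 0 ≤ u) :
    ∫ v : ℝ, f (u - v) * f v =
      Real.exp (-η₁ * u) *
        ((2 * p * q * η₂ / (η₁ + η₂)) * η₁ + p ^ 2 * η₁ ^ 2 * u) := by
  set c : ℝ := η₁ + η₂ with hcdef
  have hc : 0 < c := by positivity
  set g : ℝ → ℝ := fun v => f (u - v) * f v with hg
  set K1 : ℝ := p * q * η₁ * η₂ * Real.exp (-η₁ * u) with hK1
  set K2 : ℝ := p * q * η₁ * η₂ * Real.exp (η₂ * u) with hK2
  -- equality on the three pieces
  have e1 : EqOn g (fun v => K1 * Real.exp (c * v)) (Iio 0) := by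
    intro v hv
    have hv' : v < 0 := hv
    have h1 : (0 : ℝ) ≤ u - v := by linarith
    simp only [hg, hf, if_pos h1, if_neg (not_le.mpr hv')]
    rw [show p * η₁ * Real.exp (-η₁ * (u - v)) * (q * η₂ * Real.exp (η₂ * v))
        = p * q * η₁ * η₂ * Real.exp (-η₁ * (u - v) + η₂ * v) by rw [Real.exp_add]; ring]
    rw [hK1, show K1 * Real.exp (c * v) = K1 * Real.exp (c * v) from rfl]
    rw [hK1, mul_assoc (p * q * η₁ * η₂), ← Real.exp_add]
    congr 1
    rw [hcdef]; ring
  have e2 : EqOn g (fun _ => p ^ 2 * η₁ ^ 2 * Real.exp (-η₁ * u)) (Ico 0 u) := by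
    intro v hv
    have h1 : (0 : ℝ) ≤ u - v := by have := hv.2; linarith
    simp only [hg, hf, if_pos h1, if_pos hv.1]
    rw [show p * η₁ * Real.exp (-η₁ * (u - v)) * (p * η₁ * Real.exp (-η₁ * v))
        = p ^ 2 * η₁ ^ 2 * Real.exp (-η₁ * (u - v) + -η₁ * v) by rw [Real.exp_add]; ring,
      show -η₁ * (u - v) + -η₁ * v = -η₁ * u by ring]
  have e3 : EqOn g (fun v => K2 * Real.exp (-c * v)) (Ioi u) := by
    intro v hv
    have hv' : u < v := hv
    have h1 : ¬ (0 : ℝ) ≤ u - v := by push_neg; linarith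
    have h2 : (0 : ℝ) ≤ v := hu.trans hv'.le
    simp only [hg, hf, if_neg h1, if_pos h2]
    rw [show q * η₂ * Real.exp (η₂ * (u - v)) * (p * η₁ * Real.exp (-η₁ * v))
        = p * q * η₁ * η₂ * Real.exp (η₂ * (u - v) + -η₁ * v) by rw [Real.exp_add]; ring]
    rw [hK2, mul_assoc (p * q * η₁ * η₂), ← Real.exp_add]
    congr 1
    rw [hcdef]; ring
  -- integrability on the pieces
  have I1 : IntegrableOn g (Iio 0) := by
    refine IntegrableOn.congr_fun ?_ e1.symm measurableSet_Iio
    exact (((my_exp_mul_integrableOn_Iic hc 0).mono_set Iio_subset_Iic_self).const_mul K1)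
  have I2 : IntegrableOn g (Ico 0 u) := by
    refine IntegrableOn.congr_fun ?_ e2.symm measurableSet_Ico
    exact (integrableOn_const_iff).mpr (Or.inr (by rw [Real.volume_Ico]; exact ENNReal.ofReal_lt_top))
  have I3 : IntegrableOn g (Ici u) := by
    rw [integrableOn_Ici_iff_integrableOn_Ioi]
    refine IntegrableOn.congr_fun ?_ e3.symm measurableSet_Ioi
    exact (exp_neg_integrableOn_Ioi u hc).const_mul K2
  have I23 : IntegrableOn g (Ici 0) := by
    rw [← Ico_union_Ici_eq_Ici hu]; exact I2.union I3
  have hdisj : Disjoint (Ico 0 u) (Ici u) := by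
    apply Set.disjoint_left.mpr
    intro x hx hx'
    exact absurd hx.2 (not_lt.mpr hx')
  -- split the integral
  have hsplit : ∫ v : ℝ, g v
      = (∫ v in Iio 0, g v) + ((∫ v in Ico 0 u, g v) + ∫ v in Ici u, g v) := by
    rw [← intervalIntegral.integral_Iio_add_Ici I1 I23]
    congr 1
    rw [← setIntegral_union hdisj measurableSet_Ici I2 I3, Ico_union_Ici_eq_Ici hu]
  -- compute each piece
  have A : ∫ v in Iio 0, g v = K1 / c := by
    rw [setIntegral_congr_fun measurableSet_Iio e1,
      setIntegral_congr_set (Iio_ae_eq_Iic (a := (0:ℝ))), integral_const_mul,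
      my_integral_exp_mul_Iic hc 0]
    rw [mul_zero, Real.exp_zero]
    ring
  have B : ∫ v in Ico 0 u, g v = p ^ 2 * η₁ ^ 2 * Real.exp (-η₁ * u) * u := by
    rw [setIntegral_congr_fun measurableSet_Ico e2, setIntegral_const, Real.volume_real_Ico_of_le hu,
      sub_zero, smul_eq_mul]
    ring
  have C : ∫ v in Ici u, g v = K1 / c := by
    rw [← setIntegral_congr_set (Ioi_ae_eq_Ici (a := u)),
      setIntegral_congr_fun measurableSet_Ioi e3, integral_const_mul,
      my_integral_exp_neg_mul_Ioi hc u, hK2, hK1]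
    have hexp : Real.exp (η₂ * u) * Real.exp (-c * u) = Real.exp (-η₁ * u) := by
      rw [← Real.exp_add]; congr 1; rw [hcdef]; ring
    calc p * q * η₁ * η₂ * Real.exp (η₂ * u) * (Real.exp (-c * u) / c)
        = p * q * η₁ * η₂ * (Real.exp (η₂ * u) * Real.exp (-c * u)) / c := by ring
      _ = p * q * η₁ * η₂ * Real.exp (-η₁ * u) / c := by rw [hexp]
  have : ∫ v : ℝ, f (u - v) * f v = ∫ v : ℝ, g v := rfl
  rw [this, hsplit, A, B, C, hK1]
  field_simp
  ring
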